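/- Let n ≥ 1, let L : ℝⁿ → ℝ be any function, and let w, c ∈ ℝⁿ with wᵢ ≠ 0 and cᵢ ≠ 0 for every coordinate i. Assume the multiplicative reparametrization invariance L(v ⊙ c) = L(v) for all v ∈ ℝⁿ. Then for every ρ > 0 and every p ∈ [1, ∞], the worst-case adaptive sharpness is invariant: sup { L(w ⊙ c + δ) − L(w ⊙ c) : δ ∈ ℝⁿ, ‖δ ⊙ |w ⊙ c|⁻¹‖_p ≤ ρ } = sup { L(w + δ) − L(w) : δ ∈ ℝⁿ, ‖δ ⊙ |w|⁻¹‖_p ≤ ρ }, where the suprema are taken in the extended reals. -/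

import Mathlib

open scoped ENNReal NNReal

lemma norm_congr_abs_aux {n : ℕ} (p : ℝ≥0∞) [Fact (1 ≤ p)] (f g : Fin n → ℝ)
    (h : ∀ i, |f i| = |g i|) :
    ‖(WithLp.equiv p (Fin n → ℝ)).symm f‖ = ‖(WithLp.equiv p (Fin n → ℝ)).symm g‖ := by
  rcases eq_or_ne p ∞ with hp | hp
  · subst hp
    rw [PiLp.norm_eq_ciSup, PiLp.norm_eq_ciSup]
    simp only [WithLp.equiv_symm_apply, WithLp.ofLp_toLp, Real.norm_eq_abs, h]
  · have h1 : (1 : ℝ≥0∞) ≤ p := Fact.out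
    have hp0 : 0 < p.toReal := ENNReal.toReal_pos (by intro h0; simp [h0] at h1) hp
    rw [PiLp.norm_eq_sum hp0, PiLp.norm_eq_sum hp0]
    simp only [WithLp.equiv_symm_apply, WithLp.ofLp_toLp, Real.norm_eq_abs, h]

/-- Worst-case adaptive sharpness (with elementwise scaling `c = |w|`) is invariant
under multiplicative reparametrizations `v ↦ v ⊙ c` that leave the loss unchanged. -/
theorem worst_case_adaptive_sharpness_reparam_invariant
    (n : ℕ) (hn : 1 ≤ n) (L : (Fin n → ℝ) → ℝ) (w c : Fin n → ℝ)
    (hw : ∀ i, w i ≠ 0) (hc : ∀ i, c i ≠ 0)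
    (hinv : ∀ v : Fin n → ℝ, L (v * c) = L v)
    (ρ : ℝ) (hρ : 0 < ρ) (p : ℝ≥0∞) [Fact (1 ≤ p)] :
    sSup {s : EReal | ∃ δ : Fin n → ℝ,
        ‖(WithLp.equiv p (Fin n → ℝ)).symm (fun i => δ i / |w i * c i|)‖ ≤ ρ ∧
        s = ((L (w * c + δ) - L (w * c) : ℝ) : EReal)} =
    sSup {s : EReal | ∃ δ : Fin n → ℝ,
        ‖(WithLp.equiv p (Fin n → ℝ)).symm (fun i => δ i / |w i|)‖ ≤ ρ ∧
        s = ((L (w + δ) - L w : ℝ) : EReal)} := by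
  congr 1
  ext s
  constructor
  · rintro ⟨δ, hδ, rfl⟩
    refine ⟨fun i => δ i / c i, ?_, ?_⟩
    · rw [norm_congr_abs_aux p _ (fun i => δ i / |w i * c i|)
        (fun i => by rw [abs_div, abs_div, abs_div, abs_abs, abs_abs, abs_mul, div_div, mul_comm])]
      exact hδ
    · have : (w + fun i => δ i / c i) * c = w * c + δ := by
        funext i
        simp only [Pi.add_apply, Pi.mul_apply]
        rw [add_mul, div_mul_cancel₀ _ (hc i)]
      rw [← hinv (w + fun i => δ i / c i), this, ← hinv w]
  · rintro ⟨δ, hδ, rfl⟩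
    refine ⟨δ * c, ?_, ?_⟩
    · rw [norm_congr_abs_aux p _ (fun i => δ i / |w i|)
        (fun i => by
          simp only [Pi.mul_apply, abs_div, abs_mul, abs_abs]
          rw [mul_div_mul_right _ _ (abs_ne_zero.mpr (hc i))])]
      exact hδ
    · rw [hinv w, ← hinv (w + δ)]
      rw [add_mul]
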